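/- Let (π, t) be a representation of a C*-correspondence X over A. Then the pair (I_{(π,t)}, I'_{(π,t)}) with I_{(π,t)} = ker π and I'_{(π,t)} = π⁻¹(ψ_t(K(X))) is a T-pair: I_{(π,t)} is positively invariant and I_{(π,t)} ⊂ I'_{(π,t)} ⊂ J(I_{(π,t)}). -/

import Mathlib

noncomputable section

/-- A (right) Hilbert C*-module over a C*-algebra `A`. -/
class HilbertModule (A : Type*) [CStarAlgebra A] (X : Type*)
    [NormedAddCommGroup X] [NormedSpace ℂ X] : Type _ where
  rsmul : X → A → X
  inner : X → X → A
  rsmul_add_left : ∀ (x y : X) (a : A), rsmul (x + y) a = rsmul x a + rsmul y a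
  rsmul_add_right : ∀ (x : X) (a b : A), rsmul x (a + b) = rsmul x a + rsmul x b
  rsmul_rsmul : ∀ (x : X) (a b : A), rsmul (rsmul x a) b = rsmul x (a * b)
  rsmul_csmul_left : ∀ (c : ℂ) (x : X) (a : A), rsmul (c • x) a = c • rsmul x a
  rsmul_csmul_right : ∀ (c : ℂ) (x : X) (a : A), rsmul x (c • a) = c • rsmul x a
  inner_add_left : ∀ (x y z : X), inner (x + y) z = inner x z + inner y z
  inner_add_right : ∀ (x y z : X), inner x (y + z) = inner x y + inner x z
  inner_csmul_right : ∀ (c : ℂ) (x y : X), inner x (c • y) = c • inner x y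
  star_inner : ∀ (x y : X), star (inner x y) = inner y x
  inner_rsmul_right : ∀ (x y : X) (a : A), inner x (rsmul y a) = inner x y * a
  inner_self_isPositive : ∀ x : X, ∃ b : A, inner x x = star b * b
  norm_sq_inner : ∀ x : X, ‖x‖ ^ 2 = ‖inner x x‖
  norm_inner_le : ∀ x y : X, ‖inner x y‖ ≤ ‖x‖ * ‖y‖
  norm_rsmul_le : ∀ (x : X) (a : A), ‖rsmul x a‖ ≤ ‖x‖ * ‖a‖

namespace HilbertModule

variable {A : Type*} [CStarAlgebra A] {X : Type*}
  [NormedAddCommGroup X] [NormedSpace ℂ X] [HilbertModule A X]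

/-- The closed submodule `X·S` generated by products `ξ·a`, `a ∈ S`. -/
def idealSub (X : Type*) {A : Type*} [CStarAlgebra A] [NormedAddCommGroup X]
    [NormedSpace ℂ X] [HilbertModule A X] (S : Set A) : Set X :=
  closure (Submodule.span ℂ {x : X | ∃ (ξ : X) (a : A), a ∈ S ∧ x = rsmul ξ a} : Set X)

/-- The rank-one ("theta") operator `ζ ↦ ξ⟨η,ζ⟩`. -/
def rankOne (A : Type*) {X : Type*} [CStarAlgebra A] [NormedAddCommGroup X]
    [NormedSpace ℂ X] [HilbertModule A X] (ξ η : X) : X →L[ℂ] X :=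
  LinearMap.mkContinuous
    { toFun := fun ζ => rsmul ξ (inner (A := A) η ζ)
      map_add' := fun x y => by
        show rsmul ξ (inner (A := A) η (x + y)) = _
        rw [inner_add_right, rsmul_add_right]
      map_smul' := fun c x => by
        show rsmul ξ (inner (A := A) η (c • x)) = _
        simp only [RingHom.id_apply]
        rw [inner_csmul_right, rsmul_csmul_right] }
    (‖ξ‖ * ‖η‖)
    (fun ζ => by
      calc ‖rsmul ξ (inner (A := A) η ζ)‖ ≤ ‖ξ‖ * ‖inner (A := A) η ζ‖ :=
            norm_rsmul_le _ _
        _ ≤ ‖ξ‖ * (‖η‖ * ‖ζ‖) :=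
            mul_le_mul_of_nonneg_left (norm_inner_le _ _) (norm_nonneg _)
        _ = ‖ξ‖ * ‖η‖ * ‖ζ‖ := (mul_assoc _ _ _).symm)

/-- The set of "compact" operators `K(X)`: the closed linear span of rank-one operators. -/
def compacts (A X : Type*) [CStarAlgebra A] [NormedAddCommGroup X]
    [NormedSpace ℂ X] [HilbertModule A X] : Set (X →L[ℂ] X) :=
  closure (Submodule.span ℂ {T : X →L[ℂ] X | ∃ ξ η : X, T = rankOne A ξ η} : Set (X →L[ℂ] X))

/-- `K(X·I)`, viewed inside the operators on `X`: the closed span of rank-one operators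
with both legs in the subset `S`. -/
def compactsOn (A : Type*) {X : Type*} [CStarAlgebra A] [NormedAddCommGroup X]
    [NormedSpace ℂ X] [HilbertModule A X] (S : Set X) : Set (X →L[ℂ] X) :=
  closure (Submodule.span ℂ
    {T : X →L[ℂ] X | ∃ ξ ∈ S, ∃ η ∈ S, T = rankOne A ξ η} : Set (X →L[ℂ] X))

/-- An operator is adjointable if it has an adjoint with respect to the `A`-valued
inner product. -/
def IsAdjointable (A : Type*) {X : Type*} [CStarAlgebra A] [NormedAddCommGroup X]
    [NormedSpace ℂ X] [HilbertModule A X] (S : X →L[ℂ] X) : Prop :=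
  ∃ T : X →L[ℂ] X, ∀ x y : X, inner (A := A) (S x) y = inner (A := A) x (T y)

end HilbertModule

/-- A C*-correspondence over `A`: a Hilbert `A`-module with a left action of `A`
by adjointable operators. -/
class Correspondence (A : Type*) [CStarAlgebra A] (X : Type*)
    [NormedAddCommGroup X] [NormedSpace ℂ X] extends HilbertModule A X where
  lsmul : A → X → X
  lsmul_add_left : ∀ (a b : A) (x : X), lsmul (a + b) x = lsmul a x + lsmul b x
  lsmul_add_right : ∀ (a : A) (x y : X), lsmul a (x + y) = lsmul a x + lsmul a y
  lsmul_mul : ∀ (a b : A) (x : X), lsmul (a * b) x = lsmul a (lsmul b x)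
  lsmul_csmul_left : ∀ (c : ℂ) (a : A) (x : X), lsmul (c • a) x = c • lsmul a x
  lsmul_csmul_right : ∀ (c : ℂ) (a : A) (x : X), lsmul a (c • x) = c • lsmul a x
  inner_lsmul_left : ∀ (a : A) (x y : X), inner (lsmul a x) y = inner x (lsmul (star a) y)
  lsmul_rsmul : ∀ (a : A) (x : X) (b : A), lsmul a (rsmul x b) = rsmul (lsmul a x) b
  norm_lsmul_le : ∀ (a : A) (x : X), ‖lsmul a x‖ ≤ ‖a‖ * ‖x‖

namespace Correspondence

open HilbertModule

variable {A : Type*} [CStarAlgebra A] {X : Type*}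
  [NormedAddCommGroup X] [NormedSpace ℂ X] [Correspondence A X]

/-- The left action `φ_X(a)` as a continuous linear operator on `X`. -/
def lact (A : Type*) {X : Type*} [CStarAlgebra A] [NormedAddCommGroup X]
    [NormedSpace ℂ X] [Correspondence A X] (a : A) : X →L[ℂ] X :=
  LinearMap.mkContinuous
    { toFun := lsmul a
      map_add' := lsmul_add_right a
      map_smul' := fun c x => by
        show lsmul a (c • x) = _
        simp only [RingHom.id_apply]; rw [lsmul_csmul_right] }
    ‖a‖ (norm_lsmul_le a)

/-- The ideal `X(S)`: closed span of `{⟨η, φ_X(a)ξ⟩ : a ∈ S}`. -/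
def corrApply (X : Type*) {A : Type*} [CStarAlgebra A] [NormedAddCommGroup X]
    [NormedSpace ℂ X] [Correspondence A X] (S : Set A) : Set A :=
  closure (Submodule.span ℂ
    {b : A | ∃ a ∈ S, ∃ ξ η : X, b = inner (A := A) η (lsmul a ξ)} : Set A)

/-- The ideal `X⁻¹(S) = {a : ⟨η, φ_X(a)ξ⟩ ∈ S for all ξ, η}`. -/
def corrInv (X : Type*) {A : Type*} [CStarAlgebra A] [NormedAddCommGroup X]
    [NormedSpace ℂ X] [Correspondence A X] (S : Set A) : Set A :=
  {a : A | ∀ ξ η : X, inner (A := A) η (lsmul a ξ) ∈ S}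

/-- The kernel of the left action `φ_X`. -/
def kerLact (X : Type*) {A : Type*} [CStarAlgebra A] [NormedAddCommGroup X]
    [NormedSpace ℂ X] [Correspondence A X] : Set A :=
  {a : A | ∀ ξ : X, lsmul a ξ = 0}

/-- Katsura's ideal `J_X = φ_X⁻¹(K(X)) ∩ (ker φ_X)^⊥`. -/
def JX (X : Type*) {A : Type*} [CStarAlgebra A] [NormedAddCommGroup X]
    [NormedSpace ℂ X] [Correspondence A X] : Set A :=
  {a : A | lact A (X := X) a ∈ compacts A X ∧ ∀ b ∈ kerLact X, a * b = 0}

end Correspondence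

open HilbertModule Correspondence

/-- Data presenting a Hilbert `B`-module `Y` as the quotient `X_I = X/XI` of a Hilbert
`A`-module `X` by a closed two-sided ideal `I` of `A` (with `B` playing the role of `A/I`). -/
structure QuotientData (A B : Type*) [CStarAlgebra A] [CStarAlgebra B]
    (I : TwoSidedIdeal A)
    (X Y : Type*) [NormedAddCommGroup X] [NormedSpace ℂ X] [HilbertModule A X]
    [NormedAddCommGroup Y] [NormedSpace ℂ Y] [HilbertModule B Y] : Type _ where
  π : A →⋆ₐ[ℂ] B
  π_surjective : Function.Surjective π
  π_ker : ∀ a : A, π a = 0 ↔ a ∈ I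
  q : X →ₗ[ℂ] Y
  q_surjective : Function.Surjective q
  q_ker : ∀ ξ : X, q ξ = 0 ↔ ξ ∈ idealSub X (I : Set A)
  q_inner : ∀ ξ ζ : X, inner (A := B) (q ξ) (q ζ) = π (inner (A := A) ξ ζ)
  q_rsmul : ∀ (ξ : X) (a : A), q (rsmul ξ a) = rsmul (q ξ) (π a)


/-- Quotient data compatible with the left actions (presenting `X_I` as a
C*-correspondence over `A/I`). -/
structure CorrQuotientData (A B : Type*) [CStarAlgebra A] [CStarAlgebra B]
    (I : TwoSidedIdeal A)
    (X Y : Type*) [NormedAddCommGroup X] [NormedSpace ℂ X] [Correspondence A X]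
    [NormedAddCommGroup Y] [NormedSpace ℂ Y] [Correspondence B Y]
    extends QuotientData A B I X Y where
  q_lsmul : ∀ (a : A) (ξ : X), q (lsmul a ξ) = lsmul (π a) (q ξ)

/-- Katsura's ideal `J(I) = {a : [φ_X(a)]_I ∈ K(X_I), a·X⁻¹(I) ⊂ I}`, expressed via
quotient data presenting `X_I`. -/
def JofI {A B : Type*} [CStarAlgebra A] [CStarAlgebra B] {I : TwoSidedIdeal A}
    {X Y : Type*} [NormedAddCommGroup X] [NormedSpace ℂ X] [Correspondence A X]
    [NormedAddCommGroup Y] [NormedSpace ℂ Y] [HilbertModule B Y]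
    (D : QuotientData A B I X Y) : Set A :=
  {a : A | (∃ T ∈ compacts B Y, ∀ ξ : X, T (D.q ξ) = D.q (lsmul a ξ)) ∧
    ∀ b ∈ corrInv X (I : Set A), a * b ∈ I}

/-- A Hilbert `A`-bimodule: a C*-correspondence together with a left inner product
satisfying `φ_X(⟪ξ,η⟫) = θ_{ξ,η}`. -/
class HilbertBimodule (A : Type*) [CStarAlgebra A] (X : Type*)
    [NormedAddCommGroup X] [NormedSpace ℂ X] extends Correspondence A X where
  linner : X → X → A
  lsmul_linner : ∀ ξ η ζ : X, lsmul (linner ξ η) ζ = rsmul ξ (inner η ζ)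

/-- The closed subspace `φ_X(S)X`: closed span of `{φ_X(a)ξ : a ∈ S}`. -/
def lsmulSet (X : Type*) {A : Type*} [CStarAlgebra A] [NormedAddCommGroup X]
    [NormedSpace ℂ X] [Correspondence A X] (S : Set A) : Set X :=
  closure (Submodule.span ℂ
    {x : X | ∃ a ∈ S, ∃ ξ : X, x = Correspondence.lsmul a ξ} : Set X)

section Stmt16Aux

open HilbertModule

variable {A : Type*} [CStarAlgebra A] {X : Type*}
  [NormedAddCommGroup X] [NormedSpace ℂ X] [HilbertModule A X]

lemma aux_rankOne_apply (ξ η ζ : X) :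
    rankOne A ξ η ζ = rsmul ξ (inner (A := A) η ζ) := rfl

lemma aux_inner_rsmul_left (x y : X) (a : A) :
    inner (A := A) (rsmul x a) y = star a * inner (A := A) x y := by
  rw [← star_inner (A := A) y, inner_rsmul_right, star_mul, star_inner]

lemma aux_inner_csmul_left (c : ℂ) (x y : X) :
    inner (A := A) (c • x) y = star c • inner (A := A) x y := by
  rw [← star_inner (A := A) y, inner_csmul_right, star_smul, star_inner]

lemma aux_inner_zero_left (y : X) : inner (A := A) (0 : X) y = 0 := by
  have h := inner_add_left (A := A) (0 : X) 0 y
  rw [add_zero] at h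
  exact (left_eq_add.mp h)

lemma aux_inner_zero_right (x : X) : inner (A := A) x (0 : X) = 0 := by
  have h := inner_add_right (A := A) x (0 : X) 0
  rw [add_zero] at h
  exact (left_eq_add.mp h)

lemma aux_span_comp {s u : X →L[ℂ] X}
    (hs : s ∈ Submodule.span ℂ {T : X →L[ℂ] X | ∃ ξ η, T = rankOne A ξ η})
    (hu : u ∈ Submodule.span ℂ {T : X →L[ℂ] X | ∃ ξ η, T = rankOne A ξ η}) :
    s.comp u ∈ Submodule.span ℂ {T : X →L[ℂ] X | ∃ ξ η, T = rankOne A ξ η} := by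
  induction hs using Submodule.span_induction with
  | mem s hsm =>
    obtain ⟨ξ, η, rfl⟩ := hsm
    induction hu using Submodule.span_induction with
    | mem v hvm =>
      obtain ⟨ξ', η', rfl⟩ := hvm
      refine Submodule.subset_span ⟨rsmul ξ (inner (A := A) η ξ'), η', ?_⟩
      ext ζ
      show rankOne A ξ η (rankOne A ξ' η' ζ) = rankOne A (rsmul ξ (inner (A := A) η ξ')) η' ζ
      rw [aux_rankOne_apply, aux_rankOne_apply, aux_rankOne_apply, inner_rsmul_right,
        ← rsmul_rsmul]
    | zero => simpa using Submodule.zero_mem _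
    | add x y hx hy ihx ihy =>
      have h : (rankOne A ξ η).comp (x + y)
          = (rankOne A ξ η).comp x + (rankOne A ξ η).comp y := by
        ext ζ; simp
      rw [h]
      exact Submodule.add_mem _ ihx ihy
    | smul c x hx ih =>
      have h : (rankOne A ξ η).comp (c • x) = c • (rankOne A ξ η).comp x := by
        ext ζ; simp
      rw [h]
      exact Submodule.smul_mem _ c ih
  | zero => simpa using Submodule.zero_mem _
  | add x y hx hy ihx ihy =>
    rw [ContinuousLinearMap.add_comp]
    exact Submodule.add_mem _ ihx ihy
  | smul c x hx ih =>
    rw [ContinuousLinearMap.smul_comp]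
    exact Submodule.smul_mem _ c ih

lemma aux_span_adjoint {s : X →L[ℂ] X}
    (hs : s ∈ Submodule.span ℂ {T : X →L[ℂ] X | ∃ ξ η, T = rankOne A ξ η}) :
    ∃ s' ∈ Submodule.span ℂ {T : X →L[ℂ] X | ∃ ξ η, T = rankOne A ξ η},
      ∀ ζ ζ' : X, inner (A := A) (s ζ) ζ' = inner (A := A) ζ (s' ζ') := by
  induction hs using Submodule.span_induction with
  | mem T hT =>
    obtain ⟨ξ, η, rfl⟩ := hT
    refine ⟨rankOne A η ξ, Submodule.subset_span ⟨η, ξ, rfl⟩, fun ζ ζ' => ?_⟩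
    rw [aux_rankOne_apply, aux_rankOne_apply, aux_inner_rsmul_left, inner_rsmul_right,
      star_inner]
  | zero =>
    exact ⟨0, Submodule.zero_mem _, fun ζ ζ' => by
      simp [aux_inner_zero_left, aux_inner_zero_right]⟩
  | add x y hx hy ihx ihy =>
    obtain ⟨x', hx', hxr⟩ := ihx
    obtain ⟨y', hy', hyr⟩ := ihy
    refine ⟨x' + y', Submodule.add_mem _ hx' hy', fun ζ ζ' => ?_⟩
    simp only [ContinuousLinearMap.add_apply, HilbertModule.inner_add_left,
      HilbertModule.inner_add_right, hxr, hyr]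
  | smul c x hx ih =>
    obtain ⟨x', hx', hxr⟩ := ih
    refine ⟨star c • x', Submodule.smul_mem _ _ hx', fun ζ ζ' => ?_⟩
    rw [ContinuousLinearMap.smul_apply, aux_inner_csmul_left, hxr,
      ContinuousLinearMap.smul_apply, inner_csmul_right]

lemma aux_adj_bound {s s' : X →L[ℂ] X}
    (hrel : ∀ ζ ζ' : X, inner (A := A) (s ζ) ζ' = inner (A := A) ζ (s' ζ')) (y : X) :
    ‖s' y‖ ≤ ‖s‖ * ‖y‖ := by
  have h1 : ‖s' y‖ ^ 2 = ‖inner (A := A) (s' y) (s' y)‖ := norm_sq_inner _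
  have h2 : inner (A := A) (s' y) (s' y) = inner (A := A) (s (s' y)) y := (hrel (s' y) y).symm
  have h3 : ‖inner (A := A) (s (s' y)) y‖ ≤ ‖s (s' y)‖ * ‖y‖ := norm_inner_le _ _
  have h4 : ‖s (s' y)‖ ≤ ‖s‖ * ‖s' y‖ := s.le_opNorm _
  have key : ‖s' y‖ ^ 2 ≤ ‖s‖ * ‖s' y‖ * ‖y‖ := by
    rw [h1, h2]
    exact h3.trans (mul_le_mul_of_nonneg_right h4 (norm_nonneg y))
  rcases (norm_nonneg (s' y)).eq_or_lt with h0 | hpos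
  · rw [← h0]; positivity
  · nlinarith [key, hpos]

lemma aux_pow_limit {r K C : ℝ} (hr : 0 ≤ r) (hK : 0 ≤ K)
    (h : ∀ n : ℕ, r ^ (2 ^ n) ≤ K ^ (2 ^ n) * C) : r ≤ K := by
  by_contra hlt
  push_neg at hlt
  rcases hK.eq_or_lt with h0 | hKpos
  · have h00 := h 0
    norm_num at h00
    rw [← h0, zero_mul] at h00
    linarith
  · have hx : 1 < r / K := (one_lt_div hKpos).2 hlt
    have hC : ∀ n : ℕ, (r / K) ^ n ≤ C := by
      intro n
      have h1 : (r / K) ^ n ≤ (r / K) ^ (2 ^ n) :=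
        pow_le_pow_right₀ hx.le (Nat.lt_two_pow_self (n := n)).le
      have h2 : (r / K) ^ (2 ^ n) ≤ C := by
        rw [div_pow, div_le_iff₀ (pow_pos hKpos _)]
        exact (h n).trans_eq (mul_comm _ _)
      exact h1.trans h2
    obtain ⟨n, hn⟩ := pow_unbounded_of_one_lt C hx
    exact absurd (hC n) (not_le.2 hn)

variable {B' : Type*} [CStarAlgebra B'] {Y : Type*}
  [NormedAddCommGroup Y] [NormedSpace ℂ Y] [HilbertModule B' Y]

lemma aux_q_norm {I : TwoSidedIdeal A} (D : QuotientData A B' I X Y) (ξ : X) :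
    ‖D.q ξ‖ ≤ ‖ξ‖ := by
  have h1 : ‖D.q ξ‖ ^ 2 = ‖D.π (inner (A := A) ξ ξ)‖ := by
    rw [norm_sq_inner (A := B'), D.q_inner]
  have h2 : ‖D.π (inner (A := A) ξ ξ)‖ ≤ ‖inner (A := A) ξ ξ‖ :=
    NonUnitalStarAlgHom.norm_apply_le D.π _
  have h3 : ‖inner (A := A) ξ ξ‖ = ‖ξ‖ ^ 2 := (norm_sq_inner ξ).symm
  have h4 : ‖D.q ξ‖ ^ 2 ≤ ‖ξ‖ ^ 2 := by rw [h1]; rw [h3] at h2; exact h2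
  exact (pow_le_pow_iff_left₀ (norm_nonneg _) (norm_nonneg _) two_ne_zero).1 h4

lemma aux_q_contr {I : TwoSidedIdeal A} (D : QuotientData A B' I X Y)
    {s : X →L[ℂ] X}
    (hs : s ∈ Submodule.span ℂ {T : X →L[ℂ] X | ∃ ξ η, T = rankOne A ξ η})
    (ζ : X) : ‖D.q (s ζ)‖ ≤ ‖s‖ * ‖D.q ζ‖ := by
  have hstep : ∀ s s' : X →L[ℂ] X,
      (∀ ζ₁ ζ₂ : X, inner (A := A) (s ζ₁) ζ₂ = inner (A := A) ζ₁ (s' ζ₂)) →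
      ‖D.q (s ζ)‖ ^ 2 ≤ ‖D.q ζ‖ * ‖D.q (s'.comp s ζ)‖ := by
    intro s s' hrel
    have h1 : ‖D.q (s ζ)‖ ^ 2 = ‖D.π (inner (A := A) (s ζ) (s ζ))‖ := by
      rw [norm_sq_inner (A := B'), D.q_inner]
    have h2 : inner (A := A) (s ζ) (s ζ) = inner (A := A) ζ (s'.comp s ζ) := hrel ζ (s ζ)
    calc ‖D.q (s ζ)‖ ^ 2 = ‖D.π (inner (A := A) ζ (s'.comp s ζ))‖ := by rw [h1, h2]
      _ = ‖inner (A := B') (D.q ζ) (D.q (s'.comp s ζ))‖ := by rw [D.q_inner]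
      _ ≤ ‖D.q ζ‖ * ‖D.q (s'.comp s ζ)‖ := norm_inner_le _ _
  have key : ∀ n : ℕ, ∀ s : X →L[ℂ] X,
      s ∈ Submodule.span ℂ {T : X →L[ℂ] X | ∃ ξ η, T = rankOne A ξ η} →
      ‖D.q (s ζ)‖ ^ (2 ^ n) * ‖D.q ζ‖ ≤ ‖s‖ ^ (2 ^ n) * ‖ζ‖ * ‖D.q ζ‖ ^ (2 ^ n) := by
    intro n
    induction n with
    | zero =>
      intro s hs
      simp only [pow_zero, pow_one]
      have h : ‖D.q (s ζ)‖ ≤ ‖s‖ * ‖ζ‖ := (aux_q_norm D _).trans (s.le_opNorm ζ)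
      exact mul_le_mul_of_nonneg_right h (norm_nonneg _)
    | succ n ih =>
      intro s hs
      obtain ⟨s', hs'mem, hrel⟩ := aux_span_adjoint hs
      have humem := aux_span_comp hs'mem hs
      have hub : ‖s'.comp s‖ ≤ ‖s‖ * ‖s‖ := by
        refine ContinuousLinearMap.opNorm_le_bound _
          (mul_nonneg (norm_nonneg _) (norm_nonneg _)) fun y => ?_
        calc ‖(s'.comp s) y‖ = ‖s' (s y)‖ := rfl
          _ ≤ ‖s‖ * ‖s y‖ := aux_adj_bound hrel _
          _ ≤ ‖s‖ * (‖s‖ * ‖y‖) :=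
              mul_le_mul_of_nonneg_left (s.le_opNorm y) (norm_nonneg _)
          _ = ‖s‖ * ‖s‖ * ‖y‖ := (mul_assoc _ _ _).symm
      have h1 := hstep s s' hrel
      have ihu := ih (s'.comp s) humem
      have e1 : (2 : ℕ) ^ (n + 1) = 2 ^ n * 2 := pow_succ 2 n
      calc ‖D.q (s ζ)‖ ^ (2 ^ (n + 1)) * ‖D.q ζ‖
          = (‖D.q (s ζ)‖ ^ 2) ^ (2 ^ n) * ‖D.q ζ‖ := by
            rw [e1, mul_comm (2 ^ n) 2, pow_mul]
        _ ≤ (‖D.q ζ‖ * ‖D.q (s'.comp s ζ)‖) ^ (2 ^ n) * ‖D.q ζ‖ := by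
            exact mul_le_mul_of_nonneg_right
              (pow_le_pow_left₀ (by positivity) h1 _) (norm_nonneg _)
        _ = ‖D.q ζ‖ ^ (2 ^ n) * (‖D.q (s'.comp s ζ)‖ ^ (2 ^ n) * ‖D.q ζ‖) := by
            rw [mul_pow]; ring
        _ ≤ ‖D.q ζ‖ ^ (2 ^ n) * (‖s'.comp s‖ ^ (2 ^ n) * ‖ζ‖ * ‖D.q ζ‖ ^ (2 ^ n)) :=
            mul_le_mul_of_nonneg_left ihu (by positivity)
        _ ≤ ‖D.q ζ‖ ^ (2 ^ n) * ((‖s‖ * ‖s‖) ^ (2 ^ n) * ‖ζ‖ * ‖D.q ζ‖ ^ (2 ^ n)) := by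
            have := pow_le_pow_left₀ (norm_nonneg _) hub (2 ^ n)
            have h' : ‖s'.comp s‖ ^ (2 ^ n) * ‖ζ‖ * ‖D.q ζ‖ ^ (2 ^ n)
                ≤ (‖s‖ * ‖s‖) ^ (2 ^ n) * ‖ζ‖ * ‖D.q ζ‖ ^ (2 ^ n) := by
              have := mul_le_mul_of_nonneg_right
                (mul_le_mul_of_nonneg_right this (norm_nonneg ζ))
                (by positivity : (0:ℝ) ≤ ‖D.q ζ‖ ^ (2 ^ n))
              exact this
            exact mul_le_mul_of_nonneg_left h' (by positivity)
        _ = ‖s‖ ^ (2 ^ (n + 1)) * ‖ζ‖ * ‖D.q ζ‖ ^ (2 ^ (n + 1)) := by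
            rw [e1, pow_mul, pow_mul, mul_pow]; ring
  by_cases hq0 : D.q ζ = 0
  · obtain ⟨s', hs'mem, hrel⟩ := aux_span_adjoint hs
    have h := hstep s s' hrel
    rw [hq0, norm_zero, zero_mul] at h
    have h0 : ‖D.q (s ζ)‖ = 0 := by nlinarith [norm_nonneg (D.q (s ζ))]
    rw [h0]; positivity
  · have hqpos : 0 < ‖D.q ζ‖ := norm_pos_iff.mpr hq0
    refine aux_pow_limit (C := ‖ζ‖ / ‖D.q ζ‖) (norm_nonneg _) (by positivity) fun n => ?_
    have hk := key n s hs
    rw [mul_pow]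
    have heq : ‖s‖ ^ (2 ^ n) * ‖D.q ζ‖ ^ (2 ^ n) * (‖ζ‖ / ‖D.q ζ‖)
        = ‖s‖ ^ (2 ^ n) * ‖ζ‖ * ‖D.q ζ‖ ^ (2 ^ n) / ‖D.q ζ‖ := by
      field_simp
    rw [heq, le_div_iff₀ hqpos]
    exact hk

lemma aux_q_push {I : TwoSidedIdeal A} (D : QuotientData A B' I X Y)
    {s : X →L[ℂ] X}
    (hs : s ∈ Submodule.span ℂ {T : X →L[ℂ] X | ∃ ξ η, T = rankOne A ξ η}) :
    ∃ S ∈ Submodule.span ℂ {T : Y →L[ℂ] Y | ∃ ξ η, T = rankOne B' ξ η},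
      ∀ ζ : X, S (D.q ζ) = D.q (s ζ) := by
  induction hs using Submodule.span_induction with
  | mem T hT =>
    obtain ⟨ξ, η, rfl⟩ := hT
    refine ⟨rankOne B' (D.q ξ) (D.q η), Submodule.subset_span ⟨_, _, rfl⟩, fun ζ => ?_⟩
    show rsmul (D.q ξ) (inner (A := B') (D.q η) (D.q ζ))
        = D.q (rsmul ξ (inner (A := A) η ζ))
    rw [D.q_inner, D.q_rsmul]
  | zero => exact ⟨0, Submodule.zero_mem _, fun ζ => by simp⟩
  | add x y hx hy ihx ihy =>
    obtain ⟨Sx, hSx, hSxr⟩ := ihx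
    obtain ⟨Sy, hSy, hSyr⟩ := ihy
    exact ⟨Sx + Sy, Submodule.add_mem _ hSx hSy, fun ζ => by
      simp [ContinuousLinearMap.add_apply, hSxr, hSyr]⟩
  | smul c x hx ih =>
    obtain ⟨Sx, hSx, hSxr⟩ := ih
    exact ⟨c • Sx, Submodule.smul_mem _ _ hSx, fun ζ => by
      simp [ContinuousLinearMap.smul_apply, hSxr]⟩

end Stmt16Aux


open HilbertModule Correspondence in
/-- for a representation `(π, t)` of `X`, the pair
`(I_{(π,t)}, I'_{(π,t)}) = (ker π, π⁻¹(ψ_t(K(X))))` is a T-pair: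
`ker π` is positively invariant and `ker π ⊂ π⁻¹(ψ_t(K(X))) ⊂ J(ker π)`. -/
theorem stmt16 {A B B' : Type*} [CStarAlgebra A] [CStarAlgebra B] [CStarAlgebra B']
    {X Y : Type*} [NormedAddCommGroup X] [NormedSpace ℂ X] [Correspondence A X]
    [NormedAddCommGroup Y] [NormedSpace ℂ Y] [HilbertModule B' Y]
    [CompleteSpace X] [CompleteSpace Y]
    (π : A →⋆ₙₐ[ℂ] B) (t : X →ₗ[ℂ] B)
    (ht₁ : ∀ ξ η : X, star (t ξ) * t η = π (inner (A := A) ξ η))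
    (ht₂ : ∀ (a : A) (ξ : X), π a * t ξ = t (lsmul a ξ))
    -- `ψ` agrees on `K(X)` with the canonical map `ψ_t`:
    (ψ : (X →L[ℂ] X) → B)
    (hψθ : ∀ ξ η : X, ψ (rankOne A ξ η) = t ξ * star (t η))
    (hψadd : ∀ S T : X →L[ℂ] X, S ∈ compacts A X → T ∈ compacts A X →
      ψ (S + T) = ψ S + ψ T)
    (hψsmul : ∀ (c : ℂ) (S : X →L[ℂ] X), S ∈ compacts A X → ψ (c • S) = c • ψ S)
    (hψcont : ContinuousOn ψ (compacts A X))
    -- `I = I_{(π,t)} = ker π`, and `Y = X_I` presented by quotient data: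
    (I : TwoSidedIdeal A) (hIker : (I : Set A) = {a : A | π a = 0})
    (hI : IsClosed (I : Set A))
    (D : QuotientData A B' I X Y) :
    corrApply X (I : Set A) ⊆ (I : Set A) ∧
    (I : Set A) ⊆ {a : A | π a ∈ ψ '' compacts A X} ∧
    {a : A | π a ∈ ψ '' compacts A X} ⊆ JofI D := by
  classical
  -- abbreviations and common facts
  have hπI : ∀ x : A, x ∈ (I : Set A) ↔ π x = 0 := fun x => by rw [hIker]; exact Iff.rfl
  have hDπ0 : ∀ x : A, π x = 0 → D.π x = 0 := fun x hx => (D.π_ker x).2 ((hπI x).2 hx)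
  have ht_norm : ∀ ξ : X, ‖t ξ‖ ≤ ‖ξ‖ := by
    intro ξ
    have h1 : ‖t ξ‖ * ‖t ξ‖ = ‖π (inner (A := A) ξ ξ)‖ := by
      rw [← ht₁]; exact CStarRing.norm_star_mul_self.symm
    have h2 : ‖π (inner (A := A) ξ ξ)‖ ≤ ‖inner (A := A) ξ ξ‖ :=
      NonUnitalStarAlgHom.norm_apply_le π _
    have h3 : ‖inner (A := A) ξ ξ‖ = ‖ξ‖ ^ 2 := (HilbertModule.norm_sq_inner ξ).symm
    have h4 : ‖t ξ‖ ^ 2 ≤ ‖ξ‖ ^ 2 := by rw [sq, h1, ← h3]; exact h2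
    exact (pow_le_pow_iff_left₀ (norm_nonneg _) (norm_nonneg _) two_ne_zero).1 h4
  have ht_cont : Continuous t :=
    AddMonoidHomClass.continuous_of_bound t 1 (fun ξ => by simpa using ht_norm ξ)
  have hq_cont : Continuous D.q :=
    AddMonoidHomClass.continuous_of_bound D.q 1 (fun ξ => by simpa using aux_q_norm D ξ)
  have h0mem : (0 : X →L[ℂ] X) ∈ compacts A X := subset_closure (Submodule.zero_mem _)
  have hψ0 : ψ 0 = 0 := by
    have h := hψsmul 0 0 h0mem
    rw [zero_smul, zero_smul] at h
    exact h
  have ht_rsmul : ∀ (ξ : X) (c : A), t (rsmul ξ c) = t ξ * π c := by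
    intro ξ c
    have e1 : star (t (rsmul ξ c)) * t (rsmul ξ c)
        = π (inner (A := A) (rsmul ξ c) (rsmul ξ c)) := ht₁ _ _
    have e2 : star (t (rsmul ξ c)) * (t ξ * π c)
        = π (inner (A := A) (rsmul ξ c) (rsmul ξ c)) := by
      rw [← mul_assoc, ht₁, ← map_mul, ← inner_rsmul_right]
    have e3 : star (t ξ * π c) * t (rsmul ξ c)
        = π (inner (A := A) (rsmul ξ c) (rsmul ξ c)) := by
      rw [star_mul, mul_assoc, ht₁, ← map_star, ← map_mul, ← aux_inner_rsmul_left]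
    have e4 : star (t ξ * π c) * (t ξ * π c)
        = π (inner (A := A) (rsmul ξ c) (rsmul ξ c)) := by
      rw [star_mul, mul_assoc, ← mul_assoc (star (t ξ)), ht₁, ← map_star, ← map_mul,
        ← map_mul, aux_inner_rsmul_left, inner_rsmul_right]
    have hdd : star (t (rsmul ξ c) - t ξ * π c) * (t (rsmul ξ c) - t ξ * π c) = 0 := by
      rw [star_sub, sub_mul, mul_sub, mul_sub, e1, e2, e3, e4]
      abel
    have hnorm : ‖t (rsmul ξ c) - t ξ * π c‖ * ‖t (rsmul ξ c) - t ξ * π c‖ = 0 := by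
      rw [← CStarRing.norm_star_mul_self, hdd, norm_zero]
    have := norm_eq_zero.mp (mul_self_eq_zero.mp hnorm)
    exact sub_eq_zero.mp this
  have ht_span : ∀ s : X →L[ℂ] X,
      s ∈ Submodule.span ℂ {T : X →L[ℂ] X | ∃ ξ η, T = rankOne A ξ η} →
      ∀ ξ : X, t (s ξ) = ψ s * t ξ := by
    intro s hs
    induction hs using Submodule.span_induction with
    | mem T hT =>
      obtain ⟨ξ', η', rfl⟩ := hT
      intro ξ
      have : t (rankOne A ξ' η' ξ) = t (rsmul ξ' (inner (A := A) η' ξ)) := rfl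
      rw [this, ht_rsmul, ← ht₁, ← mul_assoc, ← hψθ]
    | zero => intro ξ; rw [hψ0, zero_mul]; simp
    | add x y hx hy ihx ihy =>
      intro ξ
      rw [hψadd x y (subset_closure hx) (subset_closure hy), add_mul,
        ContinuousLinearMap.add_apply, map_add, ihx, ihy]
    | smul c x hx ih =>
      intro ξ
      rw [hψsmul c x (subset_closure hx), smul_mul_assoc,
        ContinuousLinearMap.smul_apply, map_smul, ih]
  refine ⟨?_, ?_, ?_⟩
  · -- positive invariance : corrApply X I ⊆ I
    intro x hx
    rw [hIker]
    have hcl : IsClosed {a : A | π a = 0} := hIker ▸ hI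
    have hsub : (Submodule.span ℂ
        {b : A | ∃ a ∈ (I : Set A), ∃ ξ η : X, b = inner (A := A) η (lsmul a ξ)} : Set A)
        ⊆ {a : A | π a = 0} := by
      intro y hy
      induction hy using Submodule.span_induction with
      | mem b hb =>
        obtain ⟨c, hcI, ξ, η, rfl⟩ := hb
        show π (inner (A := A) η (lsmul c ξ)) = 0
        have hc0 : π c = 0 := (hπI c).1 hcI
        rw [← ht₁, ← ht₂, hc0, zero_mul, mul_zero]
      | zero => show π 0 = 0; exact map_zero π
      | add u v hu hv ihu ihv => show π (u + v) = 0; rw [map_add, ihu, ihv, add_zero]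
      | smul c u hu ihu => show π (c • u) = 0; rw [map_smul, ihu, smul_zero]
    exact closure_minimal hsub hcl hx
  · -- ker π ⊆ π⁻¹(ψ(K(X)))
    intro a ha
    have ha0 : π a = 0 := (hπI a).1 ha
    exact ⟨0, h0mem, by rw [hψ0, ha0]⟩
  · -- π⁻¹(ψ(K(X))) ⊆ J(I)
    intro a ha
    obtain ⟨k, hkmem, hk⟩ := ha
    obtain ⟨u, humem, hulim⟩ := mem_closure_iff_seq_limit.mp hkmem
    have hψseq : Filter.Tendsto (fun n => ψ (u n)) Filter.atTop (nhds (ψ k)) := by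
      have hwithin : Filter.Tendsto u Filter.atTop (nhdsWithin k (compacts A X)) :=
        tendsto_nhdsWithin_of_tendsto_nhds_of_eventually_within u hulim
          (Filter.Eventually.of_forall fun n => subset_closure (humem n))
      exact Filter.Tendsto.comp (hψcont k hkmem) hwithin
    constructor
    · -- compactness of the induced operator on Y
      choose Su hSumem hSu using fun n => aux_q_push D (humem n)
      have hqc : ∀ m n : ℕ, ‖Su m - Su n‖ ≤ ‖u m - u n‖ := by
        intro m n
        refine ContinuousLinearMap.opNorm_le_bound _ (norm_nonneg _) fun y => ?_
        obtain ⟨ζ, rfl⟩ := D.q_surjective y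
        have he : (Su m - Su n) (D.q ζ) = D.q ((u m - u n) ζ) := by
          rw [ContinuousLinearMap.sub_apply, hSu, hSu, ← map_sub,
            ContinuousLinearMap.sub_apply]
        rw [he]
        exact aux_q_contr D (Submodule.sub_mem _ (humem m) (humem n)) ζ
      have hSucauchy : CauchySeq Su := by
        have hu : CauchySeq u := hulim.cauchySeq
        rw [Metric.cauchySeq_iff] at hu ⊢
        intro ε hε
        obtain ⟨N, hN⟩ := hu ε hε
        refine ⟨N, fun m hm n hn => ?_⟩
        rw [dist_eq_norm]
        calc ‖Su m - Su n‖ ≤ ‖u m - u n‖ := hqc m n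
          _ = dist (u m) (u n) := (dist_eq_norm _ _).symm
          _ < ε := hN m hm n hn
      obtain ⟨T, hTlim⟩ := cauchySeq_tendsto_of_complete hSucauchy
      refine ⟨T, mem_closure_of_tendsto hTlim
        (Filter.Eventually.of_forall fun n => hSumem n), fun ξ => ?_⟩
      have hx : Filter.Tendsto (fun n => u n ξ) Filter.atTop (nhds (k ξ)) := by
        have := ((ContinuousLinearMap.apply ℂ X ξ).continuous.tendsto k).comp hulim
        simpa [Function.comp_def] using this
      have hev : Filter.Tendsto (fun n => Su n (D.q ξ)) Filter.atTop (nhds (T (D.q ξ))) := by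
        have := ((ContinuousLinearMap.apply ℂ Y (D.q ξ)).continuous.tendsto T).comp hTlim
        simpa [Function.comp_def] using this
      have hev2 : Filter.Tendsto (fun n => D.q (u n ξ)) Filter.atTop (nhds (D.q (k ξ))) :=
        (hq_cont.tendsto _).comp hx
      have heq : (fun n => Su n (D.q ξ)) = fun n => D.q (u n ξ) := funext fun n => hSu n ξ
      have hTq : T (D.q ξ) = D.q (k ξ) := tendsto_nhds_unique (heq ▸ hev) hev2
      have htk : t (k ξ) = ψ k * t ξ := by
        have h1 : Filter.Tendsto (fun n => t (u n ξ)) Filter.atTop (nhds (t (k ξ))) :=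
          (ht_cont.tendsto _).comp hx
        have h2 : Filter.Tendsto (fun n => ψ (u n) * t ξ) Filter.atTop (nhds (ψ k * t ξ)) :=
          hψseq.mul tendsto_const_nhds
        have h3 : (fun n => t (u n ξ)) = fun n => ψ (u n) * t ξ :=
          funext fun n => ht_span (u n) (humem n) ξ
        exact tendsto_nhds_unique (h3 ▸ h1) h2
      have hta : t (k ξ) = t (lsmul a ξ) := by rw [htk, hk, ht₂]
      have hw1 : t (k ξ - lsmul a ξ) = 0 := by rw [map_sub, hta, sub_self]
      have hw0 : π (inner (A := A) (k ξ - lsmul a ξ) (k ξ - lsmul a ξ)) = 0 := by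
        rw [← ht₁, hw1, mul_zero]
      have hw3 : ‖D.q (k ξ - lsmul a ξ)‖ ^ 2 = 0 := by
        rw [HilbertModule.norm_sq_inner (A := B'), D.q_inner, hDπ0 _ hw0, norm_zero]
      have hw4 : D.q (k ξ - lsmul a ξ) = 0 := by
        rwa [pow_eq_zero_iff two_ne_zero, norm_eq_zero] at hw3
      rw [map_sub, sub_eq_zero] at hw4
      rw [hTq, hw4]
    · -- a · X⁻¹(I) ⊆ I
      intro b hb
      have hbπ : ∀ ξ η : X, π (inner (A := A) η (lsmul b ξ)) = 0 := fun ξ η =>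
        (hπI _).1 (hb ξ η)
      have hzero : ∀ s : X →L[ℂ] X,
          s ∈ Submodule.span ℂ {T : X →L[ℂ] X | ∃ ξ η, T = rankOne A ξ η} →
          ψ s * π b = 0 := by
        intro s hs
        induction hs using Submodule.span_induction with
        | mem T hT =>
          obtain ⟨ξ, η, rfl⟩ := hT
          rw [hψθ]
          have h1 : star (t (lsmul (star b) η)) = star (t η) * π b := by
            have hb2 : star (π (star b)) = π b := by
              rw [show π (star b) = star (π b) from map_star π b, star_star]
            rw [← ht₂, star_mul, hb2]
          have h2 : t (lsmul (star b) η) = 0 := by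
            have e := ht₁ (lsmul (star b) η) (lsmul (star b) η)
            have e2 : inner (A := A) (lsmul (star b) η) (lsmul (star b) η)
                = inner (A := A) η (lsmul b (lsmul (star b) η)) := by
              rw [inner_lsmul_left, star_star]
            have e3 : π (inner (A := A) (lsmul (star b) η) (lsmul (star b) η)) = 0 := by
              rw [e2]; exact hbπ _ _
            have e4 : ‖t (lsmul (star b) η)‖ * ‖t (lsmul (star b) η)‖ = 0 := by
              rw [← CStarRing.norm_star_mul_self, e, e3, norm_zero]
            exact norm_eq_zero.mp (mul_self_eq_zero.mp e4)
          rw [mul_assoc, ← h1, h2, star_zero, mul_zero]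
        | zero => rw [hψ0, zero_mul]
        | add x y hx hy ihx ihy =>
          rw [hψadd x y (subset_closure hx) (subset_closure hy), add_mul, ihx, ihy, add_zero]
        | smul c x hx ih =>
          rw [hψsmul c x (subset_closure hx), smul_mul_assoc, ih, smul_zero]
      have h2 : Filter.Tendsto (fun n => ψ (u n) * π b) Filter.atTop (nhds (ψ k * π b)) :=
        hψseq.mul tendsto_const_nhds
      have h3 : (fun n => ψ (u n) * π b) = fun _ => (0 : B) :=
        funext fun n => hzero (u n) (humem n)
      have h4 : ψ k * π b = 0 := tendsto_nhds_unique (h3 ▸ h2) tendsto_const_nhds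
      have h5 : π (a * b) = 0 := by rw [map_mul, ← hk, h4]
      exact (hπI _).2 h5
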